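/- Let 𝒜 be a monoidal category with unit object I, let T = (T, μ, η) be a monoidal monad on 𝒜, and let (G, ζ, δ, ε) be a mixed opwreath around T equipped with an opmonoidal structure ψ. Then the convolution monoid of endomorphisms of I in the mixed Kleisli category is commutative: for all morphisms f, g : GI → TI of 𝒜, f ∗ g = g ∗ f, where f ∗ g := μ_I ∘ T(μ_I) ∘ T(T(g)) ∘ T(ζ_I) ∘ T(G(f)) ∘ δ_I. -/

import Mathlib

open CategoryTheory MonoidalCategory

set_option maxHeartbeats 2000000 in
/-- Let `𝒜` be a monoidal category with unit `𝟙_𝒜`, let `T` be a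
monoidal monad on `𝒜` with lax monoidal structure `φ` (and nullary part `η_I`), and let
`(G, ζ, δ, ε)` be a mixed opwreath around `T` equipped with an opmonoidal structure
`ψ`.  Then the convolution monoid of endomorphisms of `𝟙_𝒜` in the mixed Kleisli
category is commutative. -/
theorem opmonoidal_mixed_opwreath_convolution_comm
    {𝒜 : Type*} [Category 𝒜] [MonoidalCategory 𝒜]
    (T G : 𝒜 ⥤ 𝒜) (μ : T ⋙ T ⟶ T) (η : 𝟭 𝒜 ⟶ T)
    (hassoc : ∀ X : 𝒜, T.map (μ.app X) ≫ μ.app X = μ.app (T.obj X) ≫ μ.app X)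
    (hlunit : ∀ X : 𝒜, η.app (T.obj X) ≫ μ.app X = 𝟙 (T.obj X))
    (hrunit : ∀ X : 𝒜, T.map (η.app X) ≫ μ.app X = 𝟙 (T.obj X))
    (ζ : T ⋙ G ⟶ G ⋙ T) (δ : G ⟶ G ⋙ G ⋙ T) (ε : G ⟶ T)
    (w1 : ∀ X : 𝒜, G.map (μ.app X) ≫ ζ.app X
        = ζ.app (T.obj X) ≫ T.map (ζ.app X) ≫ μ.app (G.obj X))
    (w2 : ∀ X : 𝒜, G.map (η.app X) ≫ ζ.app X = η.app (G.obj X))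
    (w3 : ∀ X : 𝒜, ζ.app X ≫ T.map (ε.app X) ≫ μ.app X = ε.app (T.obj X) ≫ μ.app X)
    (w4 : ∀ X : 𝒜, ζ.app X ≫ T.map (δ.app X) ≫ μ.app (G.obj (G.obj X))
        = δ.app (T.obj X) ≫ T.map (G.map (ζ.app X)) ≫ T.map (ζ.app (G.obj X))
            ≫ μ.app (G.obj (G.obj X)))
    (w5 : ∀ X : 𝒜, δ.app X ≫ T.map (δ.app (G.obj X)) ≫ μ.app (G.obj (G.obj (G.obj X)))
        = δ.app X ≫ T.map (G.map (δ.app X)) ≫ T.map (ζ.app (G.obj (G.obj X)))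
            ≫ μ.app (G.obj (G.obj (G.obj X))))
    (w6 : ∀ X : 𝒜, δ.app X ≫ T.map (ε.app (G.obj X)) ≫ μ.app (G.obj X) = η.app (G.obj X))
    (w7 : ∀ X : 𝒜, δ.app X ≫ T.map (G.map (ε.app X)) ≫ T.map (ζ.app X) ≫ μ.app (G.obj X)
        = η.app (G.obj X))
    -- lax monoidal structure on `T` with nullary part `η.app (𝟙_ 𝒜)`
    (φ : ∀ X Y : 𝒜, T.obj X ⊗ T.obj Y ⟶ T.obj (X ⊗ Y))
    (hφ_nat : ∀ {X Y X' Y' : 𝒜} (f : X ⟶ Y) (f' : X' ⟶ Y'),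
        (T.map f ⊗ₘ T.map f') ≫ φ Y Y' = φ X X' ≫ T.map (f ⊗ₘ f'))
    (hφ_assoc : ∀ X Y Z : 𝒜,
        (φ X Y ▷ T.obj Z) ≫ φ (X ⊗ Y) Z ≫ T.map (α_ X Y Z).hom
          = (α_ (T.obj X) (T.obj Y) (T.obj Z)).hom ≫ (T.obj X ◁ φ Y Z) ≫ φ X (Y ⊗ Z))
    (hφ_lu : ∀ X : 𝒜,
        (η.app (𝟙_ 𝒜) ▷ T.obj X) ≫ φ (𝟙_ 𝒜) X ≫ T.map (λ_ X).hom = (λ_ (T.obj X)).hom)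
    (hφ_ru : ∀ X : 𝒜,
        (T.obj X ◁ η.app (𝟙_ 𝒜)) ≫ φ X (𝟙_ 𝒜) ≫ T.map (ρ_ X).hom = (ρ_ (T.obj X)).hom)
    -- `μ` and `η` are monoidal natural transformations
    (hμ_mon : ∀ X Y : 𝒜, (μ.app X ⊗ₘ μ.app Y) ≫ φ X Y
        = φ (T.obj X) (T.obj Y) ≫ T.map (φ X Y) ≫ μ.app (X ⊗ Y))
    (hη_mon : ∀ X Y : 𝒜, (η.app X ⊗ₘ η.app Y) ≫ φ X Y = η.app (X ⊗ Y))
    -- opmonoidal structure `ψ` on the mixed opwreath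
    (ψ : ∀ X X' : 𝒜, G.obj (X ⊗ X') ⟶ T.obj (G.obj X ⊗ G.obj X'))
    (h62 : ∀ {X X' Y Y' : 𝒜} (f : X ⟶ T.obj Y) (f' : X' ⟶ T.obj Y'),
        ψ X X' ≫ T.map (G.map f ⊗ₘ G.map f') ≫ T.map (ζ.app Y ⊗ₘ ζ.app Y')
            ≫ T.map (φ (G.obj Y) (G.obj Y')) ≫ μ.app (G.obj Y ⊗ G.obj Y')
          = G.map (f ⊗ₘ f') ≫ G.map (φ Y Y') ≫ ζ.app (Y ⊗ Y') ≫ T.map (ψ Y Y')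
              ≫ μ.app (G.obj Y ⊗ G.obj Y'))
    (h63 : ∀ X X' X'' : 𝒜,
        ψ (X ⊗ X') X'' ≫ T.map (ψ X X' ⊗ₘ η.app (G.obj X''))
            ≫ T.map (φ (G.obj X ⊗ G.obj X') (G.obj X''))
            ≫ μ.app ((G.obj X ⊗ G.obj X') ⊗ G.obj X'')
            ≫ T.map (α_ (G.obj X) (G.obj X') (G.obj X'')).hom
          = G.map (α_ X X' X'').hom ≫ ψ X (X' ⊗ X'')
              ≫ T.map (η.app (G.obj X) ⊗ₘ ψ X' X'')
              ≫ T.map (φ (G.obj X) (G.obj X' ⊗ G.obj X''))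
              ≫ μ.app (G.obj X ⊗ (G.obj X' ⊗ G.obj X'')))
    (h64 : ∀ X : 𝒜,
        ψ X (𝟙_ 𝒜) ≫ T.map (η.app (G.obj X) ⊗ₘ ε.app (𝟙_ 𝒜))
            ≫ T.map (φ (G.obj X) (𝟙_ 𝒜)) ≫ μ.app (G.obj X ⊗ 𝟙_ 𝒜)
            ≫ T.map (ρ_ (G.obj X)).hom
          = G.map (ρ_ X).hom ≫ η.app (G.obj X))
    (h65 : ∀ X : 𝒜,
        ψ (𝟙_ 𝒜) X ≫ T.map (ε.app (𝟙_ 𝒜) ⊗ₘ η.app (G.obj X))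
            ≫ T.map (φ (𝟙_ 𝒜) (G.obj X)) ≫ μ.app (𝟙_ 𝒜 ⊗ G.obj X)
            ≫ T.map (λ_ (G.obj X)).hom
          = G.map (λ_ X).hom ≫ η.app (G.obj X))
    (h66 : ∀ X X' : 𝒜,
        δ.app (X ⊗ X') ≫ T.map (G.map (ψ X X')) ≫ T.map (ζ.app (G.obj X ⊗ G.obj X'))
            ≫ T.map (T.map (ψ (G.obj X) (G.obj X')))
            ≫ T.map (μ.app (G.obj (G.obj X) ⊗ G.obj (G.obj X')))
            ≫ μ.app (G.obj (G.obj X) ⊗ G.obj (G.obj X'))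
          = ψ X X' ≫ T.map (δ.app X ⊗ₘ δ.app X')
              ≫ T.map (φ (G.obj (G.obj X)) (G.obj (G.obj X')))
              ≫ μ.app (G.obj (G.obj X) ⊗ G.obj (G.obj X')))
    (h67 : ∀ X X' : 𝒜,
        ψ X X' ≫ T.map (ε.app X ⊗ₘ ε.app X') ≫ T.map (φ X X') ≫ μ.app (X ⊗ X')
          = ε.app (X ⊗ X'))
    -- conclusion: convolution of endomorphisms of the unit object is commutative
    (f g : G.obj (𝟙_ 𝒜) ⟶ T.obj (𝟙_ 𝒜)) :
    δ.app (𝟙_ 𝒜) ≫ T.map (G.map f) ≫ T.map (ζ.app (𝟙_ 𝒜)) ≫ T.map (T.map g)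
        ≫ T.map (μ.app (𝟙_ 𝒜)) ≫ μ.app (𝟙_ 𝒜)
      = δ.app (𝟙_ 𝒜) ≫ T.map (G.map g) ≫ T.map (ζ.app (𝟙_ 𝒜)) ≫ T.map (T.map f)
          ≫ T.map (μ.app (𝟙_ 𝒜)) ≫ μ.app (𝟙_ 𝒜) := by

  -- naturality helpers
  have μn : ∀ {A B : 𝒜} (h : A ⟶ B), T.map (T.map h) ≫ μ.app B = μ.app A ≫ T.map h :=
    fun h => μ.naturality h
  have ηn : ∀ {A B : 𝒜} (h : A ⟶ B), h ≫ η.app B = η.app A ≫ T.map h :=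
    fun h => η.naturality h
  have ζn : ∀ {A B : 𝒜} (h : A ⟶ B), G.map (T.map h) ≫ ζ.app B = ζ.app A ≫ T.map (G.map h) :=
    fun h => ζ.naturality h
  have δn : ∀ {A B : 𝒜} (h : A ⟶ B), G.map h ≫ δ.app B = δ.app A ≫ T.map (G.map (G.map h)) :=
    fun h => δ.naturality h
  have εn : ∀ {A B : 𝒜} (h : A ⟶ B), G.map h ≫ ε.app B = ε.app A ≫ T.map h :=
    fun h => ε.naturality h
  have unit_r : ∀ {A B : 𝒜} (h : A ⟶ T.obj B), η.app A ≫ T.map h ≫ μ.app B = h := by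
    intro A B h
    rw [← Category.assoc, ← ηn h, Category.assoc, hlunit, Category.comp_id]
  have mu_push : ∀ {A B : 𝒜} (h : A ⟶ T.obj B),
      T.map (T.map h) ≫ T.map (μ.app B) ≫ μ.app B = μ.app A ≫ T.map h ≫ μ.app B := by
    intro A B h
    rw [hassoc, reassoc_of% (μn h)]
  have phiT : ∀ {A B X Y : 𝒜} (p : A ⟶ T.obj X) (q : B ⟶ T.obj Y),
      φ A B ≫ T.map (p ⊗ₘ q) ≫ T.map (φ X Y) ≫ μ.app (X ⊗ Y)
        = ((T.map p ≫ μ.app X) ⊗ₘ (T.map q ≫ μ.app Y)) ≫ φ X Y := by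
    intro A B X Y p q
    conv_rhs => rw [← tensorHom_comp_tensorHom, Category.assoc, hμ_mon, ← Category.assoc, hφ_nat p q,
      Category.assoc]
  -- ⊠-unit lemma, left (ε ⊠ b)
  have hP1 : ∀ b : G.obj (𝟙_ 𝒜) ⟶ T.obj (𝟙_ 𝒜),
      ψ (𝟙_ 𝒜) (𝟙_ 𝒜) ≫ T.map (ε.app (𝟙_ 𝒜) ⊗ₘ b) ≫ T.map (φ (𝟙_ 𝒜) (𝟙_ 𝒜))
          ≫ μ.app (𝟙_ 𝒜 ⊗ 𝟙_ 𝒜)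
        = G.map (λ_ (𝟙_ 𝒜)).hom ≫ b ≫ T.map (λ_ (𝟙_ 𝒜)).inv := by
    intro b
    have lu : (η.app (𝟙_ 𝒜) ▷ T.obj (𝟙_ 𝒜)) ≫ φ (𝟙_ 𝒜) (𝟙_ 𝒜)
        = (λ_ (T.obj (𝟙_ 𝒜))).hom ≫ T.map (λ_ (𝟙_ 𝒜)).inv := by
      rw [← hφ_lu (𝟙_ 𝒜), Category.assoc, Category.assoc, ← CategoryTheory.Functor.map_comp,
        Iso.hom_inv_id, CategoryTheory.Functor.map_id, Category.comp_id]
    have e1 : (η.app (𝟙_ 𝒜) ⊗ₘ b) ≫ φ (𝟙_ 𝒜) (𝟙_ 𝒜)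
        = (λ_ (G.obj (𝟙_ 𝒜))).hom ≫ b ≫ T.map (λ_ (𝟙_ 𝒜)).inv := by
      calc (η.app (𝟙_ 𝒜) ⊗ₘ b) ≫ φ (𝟙_ 𝒜) (𝟙_ 𝒜)
          = ((𝟙 (𝟙_ 𝒜) ≫ η.app (𝟙_ 𝒜)) ⊗ₘ (b ≫ 𝟙 (T.obj (𝟙_ 𝒜)))) ≫ φ (𝟙_ 𝒜) (𝟙_ 𝒜) := by
            rw [Category.id_comp, Category.comp_id]
        _ = (𝟙_ 𝒜 ◁ b) ≫ (η.app (𝟙_ 𝒜) ▷ T.obj (𝟙_ 𝒜)) ≫ φ (𝟙_ 𝒜) (𝟙_ 𝒜) := by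
            rw [← tensorHom_comp_tensorHom, id_tensorHom, tensorHom_id, Category.assoc]
        _ = (𝟙_ 𝒜 ◁ b) ≫ (λ_ (T.obj (𝟙_ 𝒜))).hom ≫ T.map (λ_ (𝟙_ 𝒜)).inv := by rw [lu]
        _ = (λ_ (G.obj (𝟙_ 𝒜))).hom ≫ b ≫ T.map (λ_ (𝟙_ 𝒜)).inv := by
            rw [← Category.assoc, leftUnitor_naturality, Category.assoc]
    have e0 : ε.app (𝟙_ 𝒜) ⊗ₘ b
        = (ε.app (𝟙_ 𝒜) ⊗ₘ η.app (G.obj (𝟙_ 𝒜)))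
            ≫ (𝟙 (T.obj (𝟙_ 𝒜)) ⊗ₘ (T.map b ≫ μ.app (𝟙_ 𝒜))) := by
      conv_rhs => rw [tensorHom_comp_tensorHom, Category.comp_id, unit_r b]
    have e2 : (𝟙 (T.obj (𝟙_ 𝒜)) ⊗ₘ (T.map b ≫ μ.app (𝟙_ 𝒜))) ≫ φ (𝟙_ 𝒜) (𝟙_ 𝒜)
        = φ (𝟙_ 𝒜) (G.obj (𝟙_ 𝒜)) ≫ T.map (η.app (𝟙_ 𝒜) ⊗ₘ b) ≫ T.map (φ (𝟙_ 𝒜) (𝟙_ 𝒜))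
            ≫ μ.app (𝟙_ 𝒜 ⊗ 𝟙_ 𝒜) := by
      rw [phiT, hrunit]
    rw [e0]
    simp only [CategoryTheory.Functor.map_comp, Category.assoc]
    have e2T := T.congr_map e2
    simp only [CategoryTheory.Functor.map_comp] at e2T
    rw [reassoc_of% e2T]
    have e1T := T.congr_map (T.congr_map e1)
    simp only [CategoryTheory.Functor.map_comp] at e1T
    rw [reassoc_of% e1T]
    rw [mu_push (T.map (λ_ (𝟙_ 𝒜)).inv)]
    rw [μn (λ_ (𝟙_ 𝒜)).inv, reassoc_of% (μn b),
      reassoc_of% (μn (λ_ (G.obj (𝟙_ 𝒜))).hom), reassoc_of% (h65 (𝟙_ 𝒜)),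
      reassoc_of% (unit_r b)]
  -- ⊠-unit lemma, right (a ⊠ ε)
  have hP2 : ∀ a : G.obj (𝟙_ 𝒜) ⟶ T.obj (𝟙_ 𝒜),
      ψ (𝟙_ 𝒜) (𝟙_ 𝒜) ≫ T.map (a ⊗ₘ ε.app (𝟙_ 𝒜)) ≫ T.map (φ (𝟙_ 𝒜) (𝟙_ 𝒜))
          ≫ μ.app (𝟙_ 𝒜 ⊗ 𝟙_ 𝒜)
        = G.map (ρ_ (𝟙_ 𝒜)).hom ≫ a ≫ T.map (ρ_ (𝟙_ 𝒜)).inv := by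
    intro a
    have ru : (T.obj (𝟙_ 𝒜) ◁ η.app (𝟙_ 𝒜)) ≫ φ (𝟙_ 𝒜) (𝟙_ 𝒜)
        = (ρ_ (T.obj (𝟙_ 𝒜))).hom ≫ T.map (ρ_ (𝟙_ 𝒜)).inv := by
      rw [← hφ_ru (𝟙_ 𝒜), Category.assoc, Category.assoc, ← CategoryTheory.Functor.map_comp,
        Iso.hom_inv_id, CategoryTheory.Functor.map_id, Category.comp_id]
    have e1 : (a ⊗ₘ η.app (𝟙_ 𝒜)) ≫ φ (𝟙_ 𝒜) (𝟙_ 𝒜)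
        = (ρ_ (G.obj (𝟙_ 𝒜))).hom ≫ a ≫ T.map (ρ_ (𝟙_ 𝒜)).inv := by
      calc (a ⊗ₘ η.app (𝟙_ 𝒜)) ≫ φ (𝟙_ 𝒜) (𝟙_ 𝒜)
          = ((a ≫ 𝟙 (T.obj (𝟙_ 𝒜))) ⊗ₘ (𝟙 (𝟙_ 𝒜) ≫ η.app (𝟙_ 𝒜))) ≫ φ (𝟙_ 𝒜) (𝟙_ 𝒜) := by
            rw [Category.id_comp, Category.comp_id]
        _ = (a ▷ 𝟙_ 𝒜) ≫ (T.obj (𝟙_ 𝒜) ◁ η.app (𝟙_ 𝒜)) ≫ φ (𝟙_ 𝒜) (𝟙_ 𝒜) := by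
            rw [← tensorHom_comp_tensorHom, id_tensorHom, tensorHom_id, Category.assoc]
        _ = (a ▷ 𝟙_ 𝒜) ≫ (ρ_ (T.obj (𝟙_ 𝒜))).hom ≫ T.map (ρ_ (𝟙_ 𝒜)).inv := by rw [ru]
        _ = (ρ_ (G.obj (𝟙_ 𝒜))).hom ≫ a ≫ T.map (ρ_ (𝟙_ 𝒜)).inv := by
            rw [← Category.assoc, rightUnitor_naturality, Category.assoc]
    have e0 : a ⊗ₘ ε.app (𝟙_ 𝒜)
        = (η.app (G.obj (𝟙_ 𝒜)) ⊗ₘ ε.app (𝟙_ 𝒜))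
            ≫ ((T.map a ≫ μ.app (𝟙_ 𝒜)) ⊗ₘ 𝟙 (T.obj (𝟙_ 𝒜))) := by
      conv_rhs => rw [tensorHom_comp_tensorHom, Category.comp_id, unit_r a]
    have e2 : ((T.map a ≫ μ.app (𝟙_ 𝒜)) ⊗ₘ 𝟙 (T.obj (𝟙_ 𝒜))) ≫ φ (𝟙_ 𝒜) (𝟙_ 𝒜)
        = φ (G.obj (𝟙_ 𝒜)) (𝟙_ 𝒜) ≫ T.map (a ⊗ₘ η.app (𝟙_ 𝒜)) ≫ T.map (φ (𝟙_ 𝒜) (𝟙_ 𝒜))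
            ≫ μ.app (𝟙_ 𝒜 ⊗ 𝟙_ 𝒜) := by
      rw [phiT, hrunit]
    rw [e0]
    simp only [CategoryTheory.Functor.map_comp, Category.assoc]
    have e2T := T.congr_map e2
    simp only [CategoryTheory.Functor.map_comp] at e2T
    rw [reassoc_of% e2T]
    have e1T := T.congr_map (T.congr_map e1)
    simp only [CategoryTheory.Functor.map_comp] at e1T
    rw [reassoc_of% e1T]
    rw [mu_push (T.map (ρ_ (𝟙_ 𝒜)).inv)]
    rw [μn (ρ_ (𝟙_ 𝒜)).inv, reassoc_of% (μn a),
      reassoc_of% (μn (ρ_ (G.obj (𝟙_ 𝒜))).hom), reassoc_of% (h64 (𝟙_ 𝒜)),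
      reassoc_of% (unit_r a)]
  have slotA : ∀ c : G.obj (𝟙_ 𝒜) ⟶ T.obj (𝟙_ 𝒜),
      δ.app (𝟙_ 𝒜) ≫ T.map (ε.app (G.obj (𝟙_ 𝒜)) ≫ T.map c ≫ μ.app (𝟙_ 𝒜))
          ≫ μ.app (𝟙_ 𝒜) = c := by
    intro c
    simp only [CategoryTheory.Functor.map_comp, Category.assoc]
    rw [mu_push c, reassoc_of% (w6 (𝟙_ 𝒜))]
    exact unit_r c
  have slotB : ∀ c : G.obj (𝟙_ 𝒜) ⟶ T.obj (𝟙_ 𝒜),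
      δ.app (𝟙_ 𝒜) ≫ T.map (G.map (ε.app (𝟙_ 𝒜)) ≫ ζ.app (𝟙_ 𝒜) ≫ T.map c ≫ μ.app (𝟙_ 𝒜))
          ≫ μ.app (𝟙_ 𝒜) = c := by
    intro c
    simp only [CategoryTheory.Functor.map_comp, Category.assoc]
    rw [mu_push c, reassoc_of% (w7 (𝟙_ 𝒜))]
    exact unit_r c
  have wSlot : ∀ c : G.obj (𝟙_ 𝒜) ⟶ T.obj (𝟙_ 𝒜),
      G.map c ≫ ζ.app (𝟙_ 𝒜) ≫ T.map (ε.app (𝟙_ 𝒜)) ≫ μ.app (𝟙_ 𝒜)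
        = ε.app (G.obj (𝟙_ 𝒜)) ≫ T.map c ≫ μ.app (𝟙_ 𝒜) := by
    intro c
    rw [w3 (𝟙_ 𝒜), reassoc_of% (εn c)]
  -- the key computation: Kleisli-composition of two ψ-tensors
  have hK : ∀ c d e h : G.obj (𝟙_ 𝒜) ⟶ T.obj (𝟙_ 𝒜),
      G.map (c ⊗ₘ d) ≫ G.map (φ (𝟙_ 𝒜) (𝟙_ 𝒜)) ≫ ζ.app (𝟙_ 𝒜 ⊗ 𝟙_ 𝒜)
          ≫ T.map (ψ (𝟙_ 𝒜) (𝟙_ 𝒜) ≫ T.map (e ⊗ₘ h) ≫ T.map (φ (𝟙_ 𝒜) (𝟙_ 𝒜))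
              ≫ μ.app (𝟙_ 𝒜 ⊗ 𝟙_ 𝒜))
          ≫ μ.app (𝟙_ 𝒜 ⊗ 𝟙_ 𝒜)
        = ψ (G.obj (𝟙_ 𝒜)) (G.obj (𝟙_ 𝒜))
            ≫ T.map ((G.map c ≫ ζ.app (𝟙_ 𝒜) ≫ T.map e ≫ μ.app (𝟙_ 𝒜))
                ⊗ₘ (G.map d ≫ ζ.app (𝟙_ 𝒜) ≫ T.map h ≫ μ.app (𝟙_ 𝒜)))
            ≫ T.map (φ (𝟙_ 𝒜) (𝟙_ 𝒜)) ≫ μ.app (𝟙_ 𝒜 ⊗ 𝟙_ 𝒜) := by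
    intro c d e h
    simp only [CategoryTheory.Functor.map_comp, Category.assoc]
    rw [mu_push (φ (𝟙_ 𝒜) (𝟙_ 𝒜)), reassoc_of% (μn (e ⊗ₘ h)), ← reassoc_of% (h62 c d),
      ← reassoc_of% (μn (e ⊗ₘ h)), ← reassoc_of% (μn (φ (𝟙_ 𝒜) (𝟙_ 𝒜))),
      ← hassoc (𝟙_ 𝒜 ⊗ 𝟙_ 𝒜)]
    have eT := T.congr_map (phiT e h)
    simp only [CategoryTheory.Functor.map_comp] at eT
    rw [reassoc_of% eT]
    simp only [← tensorHom_comp_tensorHom, CategoryTheory.Functor.map_comp, Category.assoc]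
  -- general interchange: Kleisli composite of two ψ-tensors is a ψ-tensor
  have hM : ∀ c d e h : G.obj (𝟙_ 𝒜) ⟶ T.obj (𝟙_ 𝒜),
      δ.app (𝟙_ 𝒜 ⊗ 𝟙_ 𝒜)
          ≫ T.map (G.map (ψ (𝟙_ 𝒜) (𝟙_ 𝒜) ≫ T.map (c ⊗ₘ d) ≫ T.map (φ (𝟙_ 𝒜) (𝟙_ 𝒜))
              ≫ μ.app (𝟙_ 𝒜 ⊗ 𝟙_ 𝒜)))
          ≫ T.map (ζ.app (𝟙_ 𝒜 ⊗ 𝟙_ 𝒜))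
          ≫ T.map (T.map (ψ (𝟙_ 𝒜) (𝟙_ 𝒜) ≫ T.map (e ⊗ₘ h) ≫ T.map (φ (𝟙_ 𝒜) (𝟙_ 𝒜))
              ≫ μ.app (𝟙_ 𝒜 ⊗ 𝟙_ 𝒜)))
          ≫ T.map (μ.app (𝟙_ 𝒜 ⊗ 𝟙_ 𝒜)) ≫ μ.app (𝟙_ 𝒜 ⊗ 𝟙_ 𝒜)
        = ψ (𝟙_ 𝒜) (𝟙_ 𝒜)
            ≫ T.map ((δ.app (𝟙_ 𝒜)
                  ≫ T.map (G.map c ≫ ζ.app (𝟙_ 𝒜) ≫ T.map e ≫ μ.app (𝟙_ 𝒜))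
                  ≫ μ.app (𝟙_ 𝒜))
                ⊗ₘ (δ.app (𝟙_ 𝒜)
                  ≫ T.map (G.map d ≫ ζ.app (𝟙_ 𝒜) ≫ T.map h ≫ μ.app (𝟙_ 𝒜))
                  ≫ μ.app (𝟙_ 𝒜)))
            ≫ T.map (φ (𝟙_ 𝒜) (𝟙_ 𝒜)) ≫ μ.app (𝟙_ 𝒜 ⊗ 𝟙_ 𝒜) := by
    intro c d e h
    have l1 := T.congr_map (w1 (𝟙_ 𝒜 ⊗ 𝟙_ 𝒜))
    have l2 := T.congr_map (ζn (φ (𝟙_ 𝒜) (𝟙_ 𝒜)))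
    have l3 := T.congr_map (ζn (c ⊗ₘ d))
    have l4 := T.congr_map (μn (ψ (𝟙_ 𝒜) (𝟙_ 𝒜) ≫ T.map (e ⊗ₘ h)
      ≫ T.map (φ (𝟙_ 𝒜) (𝟙_ 𝒜)) ≫ μ.app (𝟙_ 𝒜 ⊗ 𝟙_ 𝒜)))
    have l5 := T.congr_map (hassoc (𝟙_ 𝒜 ⊗ 𝟙_ 𝒜))
    have K2 := T.congr_map (T.congr_map (hK c d e h))
    have l6 := T.congr_map (μn (φ (𝟙_ 𝒜) (𝟙_ 𝒜)))
    have l7 := T.congr_map (μn ((G.map c ≫ ζ.app (𝟙_ 𝒜) ≫ T.map e ≫ μ.app (𝟙_ 𝒜))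
      ⊗ₘ (G.map d ≫ ζ.app (𝟙_ 𝒜) ≫ T.map h ≫ μ.app (𝟙_ 𝒜))))
    have eD := T.congr_map (phiT (G.map c ≫ ζ.app (𝟙_ 𝒜) ≫ T.map e ≫ μ.app (𝟙_ 𝒜))
      (G.map d ≫ ζ.app (𝟙_ 𝒜) ≫ T.map h ≫ μ.app (𝟙_ 𝒜)))
    simp only [CategoryTheory.Functor.map_comp] at l1 l2 l3 l4 l5 K2 l6 l7 eD
    simp only [CategoryTheory.Functor.map_comp, Category.assoc]
    have l8 := μn ((G.map c ≫ ζ.app (𝟙_ 𝒜) ≫ T.map e ≫ μ.app (𝟙_ 𝒜))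
      ⊗ₘ (G.map d ≫ ζ.app (𝟙_ 𝒜) ≫ T.map h ≫ μ.app (𝟙_ 𝒜)))
    have l9 := μn (φ (𝟙_ 𝒜) (𝟙_ 𝒜))
    rw [reassoc_of% l1]
    rw [reassoc_of% l2]
    rw [reassoc_of% l3]
    rw [← reassoc_of% l4]
    rw [← reassoc_of% l5]
    rw [reassoc_of% K2]
    rw [reassoc_of% l5]
    rw [reassoc_of% l6]
    rw [reassoc_of% l7]
    rw [hassoc (𝟙_ 𝒜 ⊗ 𝟙_ 𝒜)]
    rw [reassoc_of% l9]
    rw [reassoc_of% l8]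
    rw [reassoc_of% (h66 (𝟙_ 𝒜) (𝟙_ 𝒜))]
    rw [← reassoc_of% l8]
    rw [← reassoc_of% l9]
    rw [← hassoc (𝟙_ 𝒜 ⊗ 𝟙_ 𝒜)]
    rw [reassoc_of% eD]
    simp only [← tensorHom_comp_tensorHom, CategoryTheory.Functor.map_comp, Category.assoc]
  -- conjugation: Kleisli composite of λ-conjugates
  have hConj : ∀ p q : G.obj (𝟙_ 𝒜) ⟶ T.obj (𝟙_ 𝒜),
      δ.app (𝟙_ 𝒜 ⊗ 𝟙_ 𝒜)
          ≫ T.map (G.map (G.map (λ_ (𝟙_ 𝒜)).hom ≫ p ≫ T.map (λ_ (𝟙_ 𝒜)).inv))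
          ≫ T.map (ζ.app (𝟙_ 𝒜 ⊗ 𝟙_ 𝒜))
          ≫ T.map (T.map (G.map (λ_ (𝟙_ 𝒜)).hom ≫ q ≫ T.map (λ_ (𝟙_ 𝒜)).inv))
          ≫ T.map (μ.app (𝟙_ 𝒜 ⊗ 𝟙_ 𝒜)) ≫ μ.app (𝟙_ 𝒜 ⊗ 𝟙_ 𝒜)
        = G.map (λ_ (𝟙_ 𝒜)).hom ≫ δ.app (𝟙_ 𝒜) ≫ T.map (G.map p) ≫ T.map (ζ.app (𝟙_ 𝒜))
            ≫ T.map (T.map q) ≫ T.map (μ.app (𝟙_ 𝒜)) ≫ μ.app (𝟙_ 𝒜)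
            ≫ T.map (λ_ (𝟙_ 𝒜)).inv := by
    intro p q
    have zl := T.congr_map (ζn (λ_ (𝟙_ 𝒜)).inv)
    simp only [CategoryTheory.Functor.map_comp] at zl
    have cz : T.map (T.map (G.map (λ_ (𝟙_ 𝒜)).inv)) ≫ T.map (T.map (G.map (λ_ (𝟙_ 𝒜)).hom))
        = 𝟙 _ := by
      simp only [← CategoryTheory.Functor.map_comp, Iso.inv_hom_id,
        CategoryTheory.Functor.map_id]
    simp only [CategoryTheory.Functor.map_comp, Category.assoc]
    rw [reassoc_of% zl]
    rw [reassoc_of% cz]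
    rw [mu_push (T.map (λ_ (𝟙_ 𝒜)).inv)]
    rw [μn (λ_ (𝟙_ 𝒜)).inv]
    rw [← reassoc_of% (hassoc (𝟙_ 𝒜))]
    rw [← reassoc_of% (δn (λ_ (𝟙_ 𝒜)).hom)]
  -- a ⊠ ε written with λ instead of ρ
  have Pf : ∀ c : G.obj (𝟙_ 𝒜) ⟶ T.obj (𝟙_ 𝒜),
      ψ (𝟙_ 𝒜) (𝟙_ 𝒜) ≫ T.map (c ⊗ₘ ε.app (𝟙_ 𝒜)) ≫ T.map (φ (𝟙_ 𝒜) (𝟙_ 𝒜))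
          ≫ μ.app (𝟙_ 𝒜 ⊗ 𝟙_ 𝒜)
        = G.map (λ_ (𝟙_ 𝒜)).hom ≫ c ≫ T.map (λ_ (𝟙_ 𝒜)).inv := by
    intro c
    rw [hP2 c, ← unitors_equal, ← unitors_inv_equal]
  have E1 := hM f (ε.app (𝟙_ 𝒜)) (ε.app (𝟙_ 𝒜)) g
  rw [Pf f, hP1 g, wSlot f, slotA f, slotB g] at E1
  have E2 := hM (ε.app (𝟙_ 𝒜)) g f (ε.app (𝟙_ 𝒜))
  rw [Pf f, hP1 g, wSlot g, slotA g, slotB f] at E2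
  have E := ((hConj f g).symm.trans E1).trans (E2.symm.trans (hConj g f))
  rw [cancel_epi (G.map (λ_ (𝟙_ 𝒜)).hom)] at E
  simp only [← Category.assoc] at E
  rw [cancel_mono (T.map (λ_ (𝟙_ 𝒜)).inv)] at E
  simp only [Category.assoc] at E
  exact E
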